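/- Let u : [0,1] × T^d → R^d be Borel and let η be a finite positive measure on AC([0,1]; T^d) × T^d concentrated on pairs (γ, x) such that γ is an integral curve of u starting from x, and assume that for every t ∈ [0,1] the pushforward of η under the evaluation map (γ, x) ↦ γ(t) equals ρ(t, ·) L^d for some ρ(t, ·) ∈ L^1(T^d). Then for any two Borel maps v, w : [0,1] × T^d → R^d with v = u = w Lebesgue-almost everywhere on [0,1] × T^d, one has ∫ ( ∫_0^1 | v(s, γ(s)) − w(s, γ(s)) | ds ) dη(γ, x) = 0; in particular, η is concentrated on integral curves of v if and only if it is concentrated on integral curves of w. -/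

import Mathlib

open MeasureTheory
open scoped BigOperators ENNReal

noncomputable section

/-- The torus `𝕋^d = ℝ^d/ℤ^d`, as a `d`-fold product of circles of length one. -/
abbrev Torus (d : ℕ) := Fin d → AddCircle (1 : ℝ)

/-- The quotient projection `ℝ^d → 𝕋^d`. -/
def projT {d : ℕ} (x : Fin d → ℝ) : Torus d := fun i => (x i : AddCircle (1 : ℝ))

/-- `γ` is an integral curve of the (Borel) vector field `v` starting at `x`:
`γ(0) = x` and, on `[0,1]`, `γ` is the projection of an absolutely continuous lift
`Γ : [0,1] → ℝ^d` with `Γ(t) = Γ(0) + ∫₀ᵗ v(s, γ(s)) ds` (equivalently,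
`γ' (t) = v(t, γ(t))` for a.e. `t ∈ (0,1)`), the integrand being integrable. -/
def IsIntCurve {d : ℕ} (v : ℝ → Torus d → (Fin d → ℝ)) (γ : ℝ → Torus d)
    (x : Torus d) : Prop :=
  γ 0 = x ∧
  MeasureTheory.IntegrableOn (fun s => v s (γ s)) (Set.Icc (0:ℝ) 1) ∧
  ∃ Γ : ℝ → (Fin d → ℝ),
    (∀ t ∈ Set.Icc (0:ℝ) 1, projT (Γ t) = γ t) ∧
    (∀ t ∈ Set.Icc (0:ℝ) 1, Γ t = Γ 0 + ∫ s in (0:ℝ)..t, v s (γ s))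

lemma continuous_projT {d : ℕ} : Continuous (projT (d := d)) :=
  continuous_pi fun i => (AddCircle.continuous_mk' 1).comp (continuous_apply i)

/-- An integral curve is continuous on `[0,1]`. -/
lemma IsIntCurve.continuousOn {d : ℕ} {u : ℝ → Torus d → (Fin d → ℝ)}
    {γ : ℝ → Torus d} {x : Torus d} (h : IsIntCurve u γ x) :
    ContinuousOn γ (Set.Icc (0:ℝ) 1) := by
  obtain ⟨-, hint, Γ, hproj, heq⟩ := h
  have huIcc : Set.uIcc (0:ℝ) 1 = Set.Icc (0:ℝ) 1 := Set.uIcc_of_le zero_le_one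
  have hΓ : ContinuousOn Γ (Set.Icc (0:ℝ) 1) := by
    have h1 : ContinuousOn (fun t => Γ 0 + ∫ s in (0:ℝ)..t, u s (γ s))
        (Set.Icc (0:ℝ) 1) := by
      refine continuousOn_const.add ?_
      have := intervalIntegral.continuousOn_primitive_interval
        (f := fun s => u s (γ s)) (μ := volume) (a := (0:ℝ)) (b := 1)
        (by rwa [huIcc])
      rwa [huIcc] at this
    exact h1.congr heq
  have h2 : ContinuousOn (fun t => projT (Γ t)) (Set.Icc (0:ℝ) 1) :=
    continuous_projT.comp_continuousOn hΓ
  exact h2.congr fun t ht => (hproj t ht).symm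

/-- If a curve is an integral curve of `v` and `w` coincides with `v` along the curve
for a.e. time in `[0,1]`, then it is also an integral curve of `w`. -/
lemma IsIntCurve.congr_ae {d : ℕ} {v w : ℝ → Torus d → (Fin d → ℝ)}
    {γ : ℝ → Torus d} {x : Torus d} (h : IsIntCurve v γ x)
    (heq : ∀ᵐ s ∂(volume.restrict (Set.Icc (0:ℝ) 1)), v s (γ s) = w s (γ s)) :
    IsIntCurve w γ x := by
  obtain ⟨h0, hint, Γ, hproj, hΓ⟩ := h
  refine ⟨h0, hint.congr heq, Γ, hproj, ?_⟩
  intro t ht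
  rw [hΓ t ht]
  congr 1
  refine intervalIntegral.integral_congr_ae ?_
  have h' := (ae_restrict_iff' measurableSet_Icc).mp heq
  have hsub : Set.uIoc (0:ℝ) t ⊆ Set.Icc (0:ℝ) 1 := by
    rw [Set.uIoc_of_le ht.1]
    exact fun s hs => ⟨hs.1.le, hs.2.trans ht.2⟩
  filter_upwards [h'] with s hs hs'
  exact hs (hsub hs')

set_option maxHeartbeats 1000000 in
set_option synthInstance.maxHeartbeats 400000 in
/-- **Independence of the superposition on the pointwise representative.**
If `η` is a finite measure on curve–point pairs, concentrated on integral curves of `u`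
starting at the paired point, whose time-`t` marginals are absolutely continuous with
densities `ρ(t,·) ∈ L¹`, then for any two Borel representatives `v, w` of `u` the curves
seen by `η` do not distinguish `v` from `w`:
`∫ (∫₀¹ |v(s,γ(s)) − w(s,γ(s))| ds) dη(γ,x) = 0`; in particular `η` is concentrated on
integral curves of `v` iff it is concentrated on integral curves of `w`. -/
theorem representative_independence (d : ℕ)
    (u : ℝ → Torus d → (Fin d → ℝ)) (hu : Measurable (Function.uncurry u))
    (η : Measure ((ℝ → Torus d) × Torus d)) [IsFiniteMeasure η]
    (hconc : ∀ᵐ pair ∂η, IsIntCurve u pair.1 pair.2)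
    (ρ : ℝ → Torus d → ℝ)
    (hρint : ∀ t ∈ Set.Icc (0:ℝ) 1, Integrable (ρ t) (volume : Measure (Torus d)))
    (hrep : ∀ t ∈ Set.Icc (0:ℝ) 1,
      η.map (fun pair => pair.1 t)
        = (volume : Measure (Torus d)).withDensity fun x => ENNReal.ofReal (ρ t x))
    (v w : ℝ → Torus d → (Fin d → ℝ))
    (hv : Measurable (Function.uncurry v)) (hw : Measurable (Function.uncurry w))
    (hvu : ∀ᵐ q ∂((volume.restrict (Set.Icc (0:ℝ) 1)).prod (volume : Measure (Torus d))),
      v q.1 q.2 = u q.1 q.2)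
    (hwu : ∀ᵐ q ∂((volume.restrict (Set.Icc (0:ℝ) 1)).prod (volume : Measure (Torus d))),
      w q.1 q.2 = u q.1 q.2) :
    (∫ pair, (∫ s in Set.Icc (0:ℝ) 1, ‖v s (pair.1 s) - w s (pair.1 s)‖) ∂η) = 0 ∧
    ((∀ᵐ pair ∂η, IsIntCurve v pair.1 pair.2) ↔
      (∀ᵐ pair ∂η, IsIntCurve w pair.1 pair.2)) := by
  classical
  set ν : Measure ℝ := volume.restrict (Set.Icc (0:ℝ) 1) with hνdef
  -- the nonnegative "discrepancy" function
  have hgmeas : Measurable (fun q : ℝ × Torus d => (‖v q.1 q.2 - w q.1 q.2‖₊ : ℝ≥0∞)) :=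
    (hv.sub hw).nnnorm.coe_nnreal_ennreal
  -- a.e. facts on the product measure η ⊗ ν
  have h1 : ∀ᵐ p : ((ℝ → Torus d) × Torus d) × ℝ ∂(η.prod ν), IsIntCurve u p.1.1 p.1.2 := by
    rw [ae_iff]
    refine measure_mono_null
      (show {p : ((ℝ → Torus d) × Torus d) × ℝ | ¬ IsIntCurve u p.1.1 p.1.2}
          ⊆ {pair | ¬ IsIntCurve u pair.1 pair.2} ×ˢ Set.univ from
        fun p hp => ⟨hp, trivial⟩) ?_
    rw [Measure.prod_prod]
    rw [ae_iff] at hconc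
    simp [hconc]
  have h2 : ∀ᵐ p : ((ℝ → Torus d) × Torus d) × ℝ ∂(η.prod ν), p.2 ∈ Set.Icc (0:ℝ) 1 := by
    rw [ae_iff]
    refine measure_mono_null
      (show {p : ((ℝ → Torus d) × Torus d) × ℝ | ¬ p.2 ∈ Set.Icc (0:ℝ) 1}
          ⊆ (Set.univ : Set ((ℝ → Torus d) × Torus d)) ×ˢ (Set.Icc (0:ℝ) 1)ᶜ from
        fun p hp => ⟨trivial, hp⟩) ?_
    rw [Measure.prod_prod]
    have : ν (Set.Icc (0:ℝ) 1)ᶜ = 0 := by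
      rw [hνdef, Measure.restrict_apply measurableSet_Icc.compl]
      simp
    simp [this]
  -- the evaluation map is a.e. measurable on η ⊗ ν
  have heval : AEMeasurable (fun p : ((ℝ → Torus d) × Torus d) × ℝ => p.1.1 p.2)
      (η.prod ν) := by
    set G : ℕ → (((ℝ → Torus d) × Torus d) × ℝ) → Torus d :=
      fun n p => p.1.1 (((⌈p.2 * 2 ^ n⌉ : ℤ) : ℝ) / 2 ^ n) with hGdef
    have hGmeas : ∀ n, Measurable (G n) := by
      intro n
      have hk : Measurable (fun q : ((((ℝ → Torus d) × Torus d) × ℝ)) × ℤ =>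
          q.1.1.1 (((q.2 : ℤ) : ℝ) / 2 ^ n)) :=
        measurable_from_prod_countable_left fun k => by
          have hrw : (fun x : ((ℝ → Torus d) × Torus d) × ℝ =>
              (x, k).1.1.1 ((((x, k).2 : ℤ) : ℝ) / 2 ^ n))
              = fun x => x.1.1 (((k : ℤ) : ℝ) / 2 ^ n) := rfl
          rw [hrw]
          exact (measurable_pi_apply _).comp (measurable_fst.comp measurable_fst)
      exact hk.comp (measurable_id.prodMk ((measurable_snd.mul_const _).ceil))
    refine aemeasurable_of_tendsto_metrizable_ae Filter.atTop
      (fun n => (hGmeas n).aemeasurable) ?_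
    filter_upwards [h1, h2] with p hp hpI
    have hcont : ContinuousOn p.1.1 (Set.Icc (0:ℝ) 1) := hp.continuousOn
    set a : ℕ → ℝ := fun n => ((⌈p.2 * 2 ^ n⌉ : ℤ) : ℝ) / 2 ^ n with hadef
    have hpow : ∀ n : ℕ, (0:ℝ) < 2 ^ n := fun n => by positivity
    have ha_mem : ∀ n, a n ∈ Set.Icc (0:ℝ) 1 := by
      intro n
      constructor
      · apply div_nonneg _ (hpow n).le
        exact_mod_cast Int.ceil_nonneg (mul_nonneg hpI.1 (hpow n).le)
      · rw [div_le_one (hpow n)]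
        have : (⌈p.2 * 2 ^ n⌉ : ℤ) ≤ ((2:ℤ) ^ n) := by
          rw [Int.ceil_le]
          push_cast
          exact mul_le_of_le_one_left (hpow n).le hpI.2
        exact_mod_cast this
    have ha_tendsto : Filter.Tendsto a Filter.atTop (nhds p.2) := by
      have hle : ∀ n, p.2 ≤ a n := by
        intro n
        rw [le_div_iff₀ (hpow n)]
        exact Int.le_ceil _
      have hub : ∀ n, a n ≤ p.2 + (1/2 : ℝ) ^ n := by
        intro n
        rw [div_le_iff₀ (hpow n)]
        have h := (Int.ceil_lt_add_one (p.2 * 2 ^ n)).le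
        calc ((⌈p.2 * 2 ^ n⌉ : ℤ) : ℝ) ≤ p.2 * 2 ^ n + 1 := h
          _ = (p.2 + (1/2:ℝ) ^ n) * 2 ^ n := by
              rw [add_mul, div_pow, one_pow, div_mul_cancel₀ _ (hpow n).ne']
      have hlim : Filter.Tendsto (fun n => p.2 + (1/2 : ℝ) ^ n) Filter.atTop
          (nhds (p.2 + 0)) :=
        Filter.Tendsto.const_add _
          (tendsto_pow_atTop_nhds_zero_of_lt_one (by norm_num) (by norm_num))
      rw [add_zero] at hlim
      exact tendsto_of_tendsto_of_tendsto_of_le_of_le tendsto_const_nhds hlim hle hub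
    have := (hcont p.2 hpI).tendsto.comp
      (tendsto_nhdsWithin_of_tendsto_nhds_of_eventually_within a ha_tendsto
        (Filter.Eventually.of_forall ha_mem))
    exact this
  -- joint a.e. measurability of the discrepancy along curves
  have hpm : AEMeasurable (fun p : ((ℝ → Torus d) × Torus d) × ℝ => (p.2, p.1.1 p.2))
      (η.prod ν) := measurable_snd.aemeasurable.prodMk heval
  have hF : AEMeasurable
      (fun p : ((ℝ → Torus d) × Torus d) × ℝ =>
        (‖v p.2 (p.1.1 p.2) - w p.2 (p.1.1 p.2)‖₊ : ℝ≥0∞)) (η.prod ν) := by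
    have h := hgmeas.comp_aemeasurable hpm
    exact h
  -- for a.e. time, the discrepancy vanishes a.e. in space
  have hvw : ∀ᵐ q ∂(ν.prod (volume : Measure (Torus d))), v q.1 q.2 = w q.1 q.2 := by
    filter_upwards [hvu, hwu] with q hq1 hq2
    rw [hq1, hq2]
  have hslice : ∀ᵐ s ∂ν, ∀ᵐ y ∂(volume : Measure (Torus d)),
      (‖v s y - w s y‖₊ : ℝ≥0∞) = 0 := by
    filter_upwards [Measure.ae_ae_of_ae_prod hvw] with s hs
    filter_upwards [hs] with y hy
    simp [hy]
  -- the double lintegral of the discrepancy vanishes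
  have key : (∫⁻ p, (‖v p.2 (p.1.1 p.2) - w p.2 (p.1.1 p.2)‖₊ : ℝ≥0∞) ∂(η.prod ν)) = 0 := by
    rw [MeasureTheory.lintegral_prod_symm _ hF]
    have inner : ∀ᵐ s ∂ν,
        (∫⁻ pair : (ℝ → Torus d) × Torus d, (‖v s (pair.1 s) - w s (pair.1 s)‖₊ : ℝ≥0∞) ∂η)
          = 0 := by
      filter_upwards [hslice, ae_restrict_mem measurableSet_Icc] with s hs hsI
      have hev : Measurable (fun pair : (ℝ → Torus d) × Torus d => pair.1 s) :=
        (measurable_pi_apply s).comp measurable_fst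
      have hgs : Measurable (fun y : Torus d => (‖v s y - w s y‖₊ : ℝ≥0∞)) :=
        hgmeas.comp measurable_prodMk_left
      rw [← lintegral_map hgs hev, hrep s hsI]
      have h0 : ∀ᵐ y ∂((volume : Measure (Torus d)).withDensity
          fun x => ENNReal.ofReal (ρ s x)), (‖v s y - w s y‖₊ : ℝ≥0∞) = 0 :=
        hs.filter_mono (withDensity_absolutelyContinuous _ _).ae_le
      rw [lintegral_congr_ae h0, lintegral_zero]
    rw [lintegral_congr_ae inner, lintegral_zero]
  -- hence for η-a.e. curve, `v = w` along the curve for a.e. time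
  have hae : ∀ᵐ pair ∂η, ∀ᵐ s ∂ν, v s (pair.1 s) = w s (pair.1 s) := by
    have h0 := (lintegral_eq_zero_iff' hF).mp key
    filter_upwards [Measure.ae_ae_of_ae_prod h0] with pair hp
    filter_upwards [hp] with s hs
    simpa [sub_eq_zero] using hs
  have hzero : ∀ᵐ pair ∂η,
      (∫ s in Set.Icc (0:ℝ) 1, ‖v s (pair.1 s) - w s (pair.1 s)‖) = 0 := by
    filter_upwards [hae] with pair hp
    refine integral_eq_zero_of_ae ?_
    filter_upwards [hp] with s hs
    simp [hs]
  refine ⟨integral_eq_zero_of_ae hzero, ?_⟩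
  constructor
  · intro h
    filter_upwards [h, hae] with pair h1 h2
    exact h1.congr_ae h2
  · intro h
    filter_upwards [h, hae] with pair h1 h2
    refine h1.congr_ae ?_
    filter_upwards [h2] with s hs
    exact hs.symm
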